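/- The proof system L′_KC (propositional tautologies, modus ponens, interventionist axioms A1–A7, the S5 principles for K, and the axiom KL) is strongly complete for the language L′_KC with respect to epistemic recursive causal models: for every set Δ ∪ {δ} of L′_KC formulas, if every pointed epistemic causal model satisfying all formulas of Δ satisfies δ, then Δ proves δ in L′_KC. -/

import Mathlib

open Classical

/-- A finite signature: variables sorted into exogenous and endogenous, each with a
finite nonempty range of values. -/
structure Sig : Type 1 where
  Var : Type
  exo : Var → Prop
  Val : Var → Type
  [decEqVar : DecidableEq Var]
  [finVar : Fintype Var]
  [neVar : Nonempty Var]
  [decEqVal : ∀ X : Var, DecidableEq (Val X)]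
  [finVal : ∀ X : Var, Fintype (Val X)]
  [neVal : ∀ X : Var, Nonempty (Val X)]

attribute [instance] Sig.decEqVar Sig.finVar Sig.neVar Sig.decEqVal Sig.finVal Sig.neVal

variable {S : Sig}

/-- A valuation: a value for each variable. -/
abbrev Env (S : Sig) : Type := ∀ X : S.Var, S.Val X

instance : Nonempty (Env S) := ⟨fun X => Classical.arbitrary (S.Val X)⟩

/-- Values for all variables other than `V`. -/
abbrev Others (S : Sig) (V : S.Var) : Type := ∀ X : {X : S.Var // X ≠ V}, S.Val X.val

/-- The restriction of a valuation to the variables other than `V`. -/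
def Env.restrict (A : Env S) (V : S.Var) : Others S V := fun X => A X.val

/-- A family of structural functions (only the components at endogenous variables
are meaningful). -/
abbrev StructFuns (S : Sig) : Type := ∀ V : S.Var, Others S V → S.Val V

/-- A valuation complies with the structural functions: the value of each endogenous
variable is obtained by applying its structural function to the values of all
other variables. -/
def Complies (F : StructFuns S) (A : Env S) : Prop :=
  ∀ V : S.Var, ¬ S.exo V → A V = F V (A.restrict V)

/-- The endogenous variable `V` is directly causally affected by `X` under `F`. -/
def DirAff (F : StructFuns S) (X V : S.Var) : Prop :=
  ¬ S.exo V ∧ ∃ (h : X ≠ V) (g : Others S V) (x₁ x₂ : S.Val X),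
    x₁ ≠ x₂ ∧
      F V (Function.update g ⟨X, h⟩ x₁) ≠ F V (Function.update g ⟨X, h⟩ x₂)

/-- `F` is recursive: the transitive closure of the direct causal dependence
relation is asymmetric (transitivity is automatic for `Relation.TransGen`). -/
def RecursiveF (F : StructFuns S) : Prop :=
  ∀ a b : S.Var, Relation.TransGen (DirAff F) a b → ¬ Relation.TransGen (DirAff F) b a

/-- An assignment of values to a set of pairwise distinct variables. -/
abbrev Intervention (S : Sig) : Type := ∀ X : S.Var, Option (S.Val X)

/-- The empty assignment. -/
def iEmpty (S : Sig) : Intervention S := fun _ => none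

/-- Extend an assignment by additionally setting `Y` to `y` (overriding). -/
def iUpd (I : Intervention S) (Y : S.Var) (y : S.Val Y) : Intervention S :=
  Function.update I Y (some y)

/-- Combine assignments, the second overriding the first:  `[X⃗ := x⃗, Y⃗ := y⃗]`. -/
def icomp (I J : Intervention S) : Intervention S := fun W =>
  match J W with
  | some v => some v
  | none => I W

/-- The intervened family of structural functions: intervened variables get the
constant function returning the assigned value; the rest are unchanged. -/
def intF (F : StructFuns S) (I : Intervention S) : StructFuns S :=
  fun V g => (I V).getD (F V g)

/-- `A'` is the result of intervening with `I` on the valuation `A` (w.r.t. `F`):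
exogenous intervened variables get the assigned value, exogenous non-intervened
variables keep their value, and each endogenous variable complies with its new
structural function. -/
def IntervenedVal (F : StructFuns S) (A : Env S) (I : Intervention S) (A' : Env S) : Prop :=
  (∀ X : S.Var, S.exo X → ∀ v : S.Val X, I X = some v → A' X = v) ∧
  (∀ X : S.Var, S.exo X → I X = none → A' X = A X) ∧
  (∀ V : S.Var, ¬ S.exo V → A' V = intF F I V (A'.restrict V))

/-- The intervened valuation (unique when `F` is recursive). -/
noncomputable def intVal (F : StructFuns S) (A : Env S) (I : Intervention S) : Env S :=
  Classical.epsilon (IntervenedVal F A I)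

/-- The language L_KC: atoms `Y = y`, negation, conjunction, knowledge, and
interventionist counterfactual operators. -/
inductive Form (S : Sig) : Type where
  | eq (Y : S.Var) (y : S.Val Y) : Form S
  | neg (φ : Form S) : Form S
  | conj (φ ψ : Form S) : Form S
  | know (φ : Form S) : Form S
  | int (I : Intervention S) (φ : Form S) : Form S

namespace Form

/-- Material implication, defined from `¬` and `∧` as usual. -/
def impl (φ ψ : Form S) : Form S := Form.neg (Form.conj φ (Form.neg ψ))

/-- Disjunction, defined from `¬` and `∧` as usual. -/
def orF (φ ψ : Form S) : Form S := Form.neg (Form.conj (Form.neg φ) (Form.neg ψ))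

/-- Biconditional. -/
def iffF (φ ψ : Form S) : Form S := Form.conj (impl φ ψ) (impl ψ φ)

end Form

/-- A canonical contradiction. -/
noncomputable def botF (S : Sig) : Form S :=
  let X : S.Var := Classical.arbitrary S.Var
  let x : S.Val X := Classical.arbitrary (S.Val X)
  Form.conj (Form.eq X x) (Form.neg (Form.eq X x))

/-- A canonical tautology. -/
noncomputable def topF (S : Sig) : Form S := Form.neg (botF S)

/-- Disjunction of a list of formulas (the empty disjunction is a contradiction). -/
noncomputable def bigOr : List (Form S) → Form S
  | [] => botF S
  | φ :: l => l.foldl Form.orF φ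

/-- Conjunction of a list of formulas (the empty conjunction is a tautology). -/
noncomputable def bigConj : List (Form S) → Form S
  | [] => topF S
  | φ :: l => l.foldl Form.conj φ

/-- `φ` is an instance of a propositional tautology: it evaluates to `true` under
every Boolean valuation that respects negation and conjunction (treating all
other formulas as atoms). -/
def Tauto (φ : Form S) : Prop :=
  ∀ v : Form S → Bool,
    (∀ ψ : Form S, v (Form.neg ψ) = !(v ψ)) →
    (∀ ψ χ : Form S, v (Form.conj ψ χ) = (v ψ && v χ)) →
    v φ = true

/-- The assignment `[Z⃗ := z⃗, X := x]` where `Z⃗` lists all variables other than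
`X` and `V`, used in the formula `X ⇝ V`. -/
def ltInt (X V : S.Var) (g : ∀ W : {W : S.Var // W ≠ X ∧ W ≠ V}, S.Val W.val)
    (x : S.Val X) : Intervention S := fun W =>
  if h : W = X then some (h.symm ▸ x)
  else if h' : W = V then none
  else some (g ⟨W, ⟨h, h'⟩⟩)

/-- The formula `X ⇝ V`: the disjunction, over tuples `z⃗` of values for all
variables other than `X` and `V`, distinct values `x₁ ≠ x₂` of `X` and distinct
values `v₁ ≠ v₂` of `V`, of `[Z⃗:=z⃗, X:=x₁]V=v₁ ∧ [Z⃗:=z⃗, X:=x₂]V=v₂`. -/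
noncomputable def leadsTo (X V : S.Var) : Form S :=
  bigOr ((Finset.univ.filter
      (fun p : (∀ W : {W : S.Var // W ≠ X ∧ W ≠ V}, S.Val W.val) ×
          (S.Val X × S.Val X) × (S.Val V × S.Val V) =>
        p.2.1.1 ≠ p.2.1.2 ∧ p.2.2.1 ≠ p.2.2.2)).toList.map
    (fun p =>
      Form.conj
        (Form.int (ltInt X V p.1 p.2.1.1) (Form.eq V p.2.2.1))
        (Form.int (ltInt X V p.1 p.2.1.2) (Form.eq V p.2.2.2))))

/-- The chain `X₀ ⇝ X₁ ∧ ⋯ ∧ X_k ⇝ X_{k+1}`. -/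
noncomputable def chainConj (X : ℕ → S.Var) : ℕ → Form S
  | 0 => leadsTo (X 0) (X 1)
  | n + 1 => Form.conj (chainConj X n) (leadsTo (X (n + 1)) (X (n + 2)))

/-- `ψ₁ → (ψ₂ → ⋯ → (ψₙ → φ))` for a list of premises. -/
def impsFrom : List (Form S) → Form S → Form S
  | [], φ => φ
  | ψ :: l, φ => Form.impl ψ (impsFrom l φ)

/-- Satisfaction of an L_KC formula at a pointed epistemic causal model
`(⟨F, T⟩, A)`. -/
def SatK : Form S → StructFuns S → Set (Env S) → Env S → Prop
  | Form.eq Y y, _, _, A => A Y = y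
  | Form.neg φ, F, T, A => ¬ SatK φ F T A
  | Form.conj φ ψ, F, T, A => SatK φ F T A ∧ SatK ψ F T A
  | Form.know φ, F, T, _ => ∀ B ∈ T, SatK φ F T B
  | Form.int I φ, F, T, A =>
      SatK φ (intF F I) ((fun B => intVal F B I) '' T) (intVal F A I)

/-- The proof system L′_KC: propositional tautologies, modus ponens, the
interventionist axioms A1–A7, the S5 principles for K, and the axiom KL. -/
inductive ThmKC' : Form S → Prop where
  | taut : ∀ {φ : Form S}, Tauto φ → ThmKC' φ
  | mp : ∀ {φ ψ : Form S}, ThmKC' (Form.impl φ ψ) → ThmKC' φ → ThmKC' ψ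
  | a1 : ∀ (I : Intervention S) (Y : S.Var) (y y' : S.Val Y), y ≠ y' →
      ThmKC' (Form.impl (Form.int I (Form.eq Y y)) (Form.neg (Form.int I (Form.eq Y y'))))
  | a2 : ∀ (I : Intervention S) (Y : S.Var),
      ThmKC' (bigOr (((Finset.univ : Finset (S.Val Y)).toList).map
        (fun y => Form.int I (Form.eq Y y))))
  | a3 : ∀ (I : Intervention S) (Y Z : S.Var) (y : S.Val Y) (z : S.Val Z),
      ThmKC' (Form.impl (Form.conj (Form.int I (Form.eq Y y)) (Form.int I (Form.eq Z z)))
        (Form.int (iUpd I Y y) (Form.eq Z z)))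
  | a4 : ∀ (I : Intervention S) (Y : S.Var) (y : S.Val Y),
      ThmKC' (Form.int (iUpd I Y y) (Form.eq Y y))
  | a5 : ∀ (I : Intervention S) (Y Z : S.Var) (y : S.Val Y) (z : S.Val Z), Y ≠ Z →
      ThmKC' (Form.impl
        (Form.conj (Form.int (iUpd I Y y) (Form.eq Z z)) (Form.int (iUpd I Z z) (Form.eq Y y)))
        (Form.int I (Form.eq Z z)))
  | a6 : ∀ (X : ℕ → S.Var) (k : ℕ),
      (∀ i : ℕ, i ≤ k → X i ≠ X (i + 1)) → X (k + 1) ≠ X 0 →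
      ThmKC' (Form.impl (chainConj X k) (Form.neg (leadsTo (X (k + 1)) (X 0))))
  | a7 : ∀ (I : Intervention S) (U : S.Var) (u : S.Val U), S.exo U → I U = none →
      ThmKC' (Form.iffF (Form.int (iEmpty S) (Form.eq U u)) (Form.int I (Form.eq U u)))
  | axK : ∀ (φ ψ : Form S),
      ThmKC' (Form.impl (Form.know (Form.impl φ ψ))
        (Form.impl (Form.know φ) (Form.know ψ)))
  | necK : ∀ {φ : Form S}, ThmKC' φ → ThmKC' (Form.know φ)
  | axT : ∀ (φ : Form S), ThmKC' (Form.impl (Form.know φ) φ)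
  | ax4 : ∀ (φ : Form S), ThmKC' (Form.impl (Form.know φ) (Form.know (Form.know φ)))
  | ax5 : ∀ (φ : Form S),
      ThmKC' (Form.impl (Form.neg (Form.know φ)) (Form.know (Form.neg (Form.know φ))))
  | kl : ∀ (I : Intervention S) (Y : S.Var) (y : S.Val Y), ¬ S.exo Y →
      (∀ W : S.Var, (I W).isSome ↔ W ≠ Y) →
      ThmKC' (Form.impl (Form.int I (Form.eq Y y))
        (Form.know (Form.int I (Form.eq Y y))))

/-- Strong derivability from a set of premises in L′_KC. -/
def ProvKC' (Γ : Set (Form S)) (φ : Form S) : Prop :=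
  ∃ l : List (Form S), (∀ ψ ∈ l, ψ ∈ Γ) ∧ ThmKC' (impsFrom l φ)

/-- The language L′_KC: formulas generated from `[X⃗:=x⃗]Y=y` by `¬`, `∧` and `K`. -/
inductive IsKC' : Form S → Prop where
  | intEq : ∀ (I : Intervention S) (Y : S.Var) (y : S.Val Y),
      IsKC' (Form.int I (Form.eq Y y))
  | neg : ∀ {φ : Form S}, IsKC' φ → IsKC' (Form.neg φ)
  | conj : ∀ {φ ψ : Form S}, IsKC' φ → IsKC' ψ → IsKC' (Form.conj φ ψ)
  | know : ∀ {φ : Form S}, IsKC' φ → IsKC' (Form.know φ)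

section Completeness

variable {S : Sig}

/-! ### Propositional toolkit -/

/-- Boolean valuations respecting `¬` and `∧`. -/
def Resp (v : Form S → Bool) : Prop :=
  (∀ ψ : Form S, v (Form.neg ψ) = !(v ψ)) ∧
  (∀ ψ χ : Form S, v (Form.conj ψ χ) = (v ψ && v χ))

lemma tautOf {φ : Form S} (h : ∀ v : Form S → Bool, Resp v → v φ = true) : Tauto φ :=
  fun v hn hc => h v ⟨hn, hc⟩

lemma thmTaut {φ : Form S} (h : ∀ v : Form S → Bool, Resp v → v φ = true) : ThmKC' φ :=
  ThmKC'.taut (tautOf h)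

namespace Resp

variable {v : Form S → Bool}

lemma tt_neg (hv : Resp v) (a : Form S) : v (Form.neg a) = true ↔ ¬ (v a = true) := by
  simp [hv.1]

lemma tt_conj (hv : Resp v) (a b : Form S) : v (Form.conj a b) = true ↔ (v a = true ∧ v b = true) := by
  simp [hv.2]

lemma tt_impl (hv : Resp v) (a b : Form S) : v (Form.impl a b) = true ↔ ((v a = true) → (v b = true)) := by
  cases ha : v a <;> cases hb : v b <;> simp [Form.impl, hv.1, hv.2, ha, hb]

lemma tt_orF (hv : Resp v) (a b : Form S) : v (Form.orF a b) = true ↔ (v a = true ∨ v b = true) := by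
  cases ha : v a <;> cases hb : v b <;> simp [Form.orF, hv.1, hv.2, ha, hb]

lemma tt_iffF (hv : Resp v) (a b : Form S) : v (Form.iffF a b) = true ↔ ((v a = true) ↔ (v b = true)) := by
  cases ha : v a <;> cases hb : v b <;>
    simp [Form.iffF, Form.impl, hv.1, hv.2, ha, hb]

lemma tt_botF (hv : Resp v) : ¬ (v (botF S) = true) := by
  simp [botF, hv.1, hv.2]

lemma tt_impsFrom (hv : Resp v) : ∀ (l : List (Form S)) (φ : Form S),
    v (impsFrom l φ) = true ↔ ((∀ ψ ∈ l, v ψ = true) → v φ = true)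
  | [], φ => by simp [impsFrom]
  | ψ :: l, φ => by
      simp only [impsFrom, hv.tt_impl, tt_impsFrom hv l φ, List.mem_cons]
      constructor
      · intro h hall; exact h (hall ψ (Or.inl rfl)) (fun χ hχ => hall χ (Or.inr hχ))
      · intro h h1 hall; exact h (fun χ hχ => hχ.elim (fun e => e ▸ h1) (hall χ))

lemma tt_bigOr (hv : Resp v) : ∀ (l : List (Form S)),
    v (bigOr l) = true ↔ ∃ φ ∈ l, v φ = true := by
  have key : ∀ (l : List (Form S)) (a : Form S),
      v (l.foldl Form.orF a) = true ↔ (v a = true ∨ ∃ φ ∈ l, v φ = true) := by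
    intro l
    induction l with
    | nil => intro a; simp
    | cons b l ih =>
        intro a
        simp only [List.foldl_cons, ih (Form.orF a b), hv.tt_orF, List.mem_cons]
        constructor
        · rintro (⟨h | h⟩ | ⟨φ, hφ, h⟩)
          · exact Or.inl h
          · exact Or.inr ⟨b, Or.inl rfl, h⟩
          · exact Or.inr ⟨φ, Or.inr hφ, h⟩
        · rintro (h | ⟨φ, (rfl | hφ), h⟩)
          · exact Or.inl (Or.inl h)
          · exact Or.inl (Or.inr h)
          · exact Or.inr ⟨φ, hφ, h⟩
  intro l
  cases l with
  | nil => simpa [bigOr] using hv.tt_botF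
  | cons a l =>
      simp only [bigOr, key l a, List.mem_cons]
      constructor
      · rintro (h | ⟨φ, hφ, h⟩)
        · exact ⟨a, Or.inl rfl, h⟩
        · exact ⟨φ, Or.inr hφ, h⟩
      · rintro ⟨φ, (rfl | hφ), h⟩
        · exact Or.inl h
        · exact Or.inr ⟨φ, hφ, h⟩

end Resp

/-! ### Derivability toolkit -/

lemma thm_imps_weaken {l l' : List (Form S)} {φ : Form S}
    (h : ThmKC' (impsFrom l φ)) (hsub : ∀ χ ∈ l, χ ∈ l') :
    ThmKC' (impsFrom l' φ) := by
  refine ThmKC'.mp (thmTaut ?_) h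
  intro v hv
  rw [hv.tt_impl]
  intro h1
  rw [hv.tt_impsFrom] at h1 ⊢
  intro hall
  exact h1 (fun χ hχ => hall χ (hsub χ hχ))

lemma thm_imps_extract {l l' : List (Form S)} {φ ψ : Form S}
    (h : ThmKC' (impsFrom l ψ)) (hsub : ∀ χ ∈ l, χ = φ ∨ χ ∈ l') :
    ThmKC' (impsFrom l' (Form.impl φ ψ)) := by
  refine ThmKC'.mp (thmTaut ?_) h
  intro v hv
  rw [hv.tt_impl]
  intro h1
  rw [hv.tt_impsFrom] at h1 ⊢
  intro hall
  rw [hv.tt_impl]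
  intro hφ
  refine h1 (fun χ hχ => ?_)
  rcases hsub χ hχ with rfl | hm
  · exact hφ
  · exact hall χ hm

lemma thm_imps_mp {l₁ l₂ : List (Form S)} {φ ψ : Form S}
    (h1 : ThmKC' (impsFrom l₁ (Form.impl φ ψ))) (h2 : ThmKC' (impsFrom l₂ φ)) :
    ThmKC' (impsFrom (l₁ ++ l₂) ψ) := by
  refine ThmKC'.mp (ThmKC'.mp (thmTaut ?_) h1) h2
  intro v hv
  rw [hv.tt_impl]
  intro ha
  rw [hv.tt_impl]
  intro hb
  rw [hv.tt_impsFrom] at ha hb ⊢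
  intro hall
  have h3 := ha (fun χ hχ => hall χ (List.mem_append_left _ hχ))
  rw [hv.tt_impl] at h3
  exact h3 (hb (fun χ hχ => hall χ (List.mem_append_right _ hχ)))

lemma thm_imps_out {l : List (Form S)} {φ ψ : Form S}
    (h : ThmKC' (impsFrom l φ)) (himp : Tauto (Form.impl φ ψ)) :
    ThmKC' (impsFrom l ψ) := by
  refine ThmKC'.mp (thmTaut ?_) h
  intro v hv
  rw [hv.tt_impl]
  intro h1
  rw [hv.tt_impsFrom] at h1 ⊢
  intro hall
  have h2 := himp v hv.1 hv.2
  rw [hv.tt_impl] at h2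
  exact h2 (h1 hall)

lemma prov_of_thm {Γ : Set (Form S)} {φ : Form S} (h : ThmKC' φ) : ProvKC' Γ φ :=
  ⟨[], by simp, h⟩

lemma prov_of_mem {Γ : Set (Form S)} {φ : Form S} (h : φ ∈ Γ) : ProvKC' Γ φ :=
  ⟨[φ], by simpa using h, thmTaut (by
    intro v hv
    rw [show impsFrom [φ] φ = Form.impl φ φ from rfl, hv.tt_impl]
    exact id)⟩

lemma prov_mono {Γ Γ' : Set (Form S)} {φ : Form S} (h : Γ ⊆ Γ') (hp : ProvKC' Γ φ) :
    ProvKC' Γ' φ := by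
  obtain ⟨l, hl, ht⟩ := hp
  exact ⟨l, fun ψ hψ => h (hl ψ hψ), ht⟩

lemma prov_mp {Γ : Set (Form S)} {φ ψ : Form S}
    (h1 : ProvKC' Γ (Form.impl φ ψ)) (h2 : ProvKC' Γ φ) : ProvKC' Γ ψ := by
  obtain ⟨l₁, hl₁, ht₁⟩ := h1
  obtain ⟨l₂, hl₂, ht₂⟩ := h2
  refine ⟨l₁ ++ l₂, ?_, thm_imps_mp ht₁ ht₂⟩
  intro χ hχ
  rcases List.mem_append.1 hχ with h | h
  · exact hl₁ χ h
  · exact hl₂ χ h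

lemma deduction {Γ : Set (Form S)} {φ ψ : Form S}
    (h : ProvKC' (insert φ Γ) ψ) : ProvKC' Γ (Form.impl φ ψ) := by
  obtain ⟨l, hl, ht⟩ := h
  refine ⟨l.filter (fun χ => χ ≠ φ), ?_, ?_⟩
  · intro χ hχ
    have h1 := List.of_mem_filter hχ
    have h2 := List.mem_of_mem_filter hχ
    rcases hl χ h2 with h3 | h3
    · exact absurd h3 (by simpa using h1)
    · exact h3
  · refine thm_imps_extract ht ?_
    intro χ hχ
    by_cases hc : χ = φ
    · exact Or.inl hc
    · exact Or.inr (List.mem_filter.2 ⟨hχ, by simpa using hc⟩)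

/-! ### Consistency, Lindenbaum, MCS -/

def Cons (Γ : Set (Form S)) : Prop := ¬ ProvKC' Γ (botF S)

def MCS (Γ : Set (Form S)) : Prop :=
  Cons Γ ∧ ∀ φ : Form S, φ ∉ Γ → ¬ Cons (insert φ Γ)

lemma cons_mono {Γ Γ' : Set (Form S)} (h : Γ ⊆ Γ') (hc : Cons Γ') : Cons Γ :=
  fun hp => hc (prov_mono h hp)

lemma chain_finite_sub {c : Set (Set (Form S))} (hc : IsChain (· ⊆ ·) c)
    (hne : c.Nonempty) :
    ∀ l : List (Form S), (∀ ψ ∈ l, ψ ∈ ⋃₀ c) → ∃ t ∈ c, ∀ ψ ∈ l, ψ ∈ t := by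
  intro l
  induction l with
  | nil => intro _; obtain ⟨t, ht⟩ := hne; exact ⟨t, ht, by simp⟩
  | cons ψ l ih =>
      intro hl
      obtain ⟨t, htc, htl⟩ := ih (fun χ hχ => hl χ (List.mem_cons_of_mem _ hχ))
      obtain ⟨s, hsc, hψs⟩ := hl ψ (List.mem_cons_self)
      by_cases hst : s = t
      · exact ⟨t, htc, fun χ hχ => by
          rcases List.mem_cons.1 hχ with rfl | h
          · exact hst ▸ hψs
          · exact htl χ h⟩
      · rcases hc hsc htc hst with h | h
        · exact ⟨t, htc, fun χ hχ => by
            rcases List.mem_cons.1 hχ with rfl | hm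
            · exact h hψs
            · exact htl χ hm⟩
        · exact ⟨s, hsc, fun χ hχ => by
            rcases List.mem_cons.1 hχ with rfl | hm
            · exact hψs
            · exact h (htl χ hm)⟩

lemma lindenbaum {Γ : Set (Form S)} (h : Cons Γ) : ∃ Γ', Γ ⊆ Γ' ∧ MCS Γ' := by
  obtain ⟨Γ', hsub, hmax⟩ :=
    zorn_subset_nonempty {Δ : Set (Form S) | Cons Δ}
      (fun c hcsub hchain hcne => by
        refine ⟨⋃₀ c, ?_, fun s hs => Set.subset_sUnion_of_mem hs⟩
        intro hp
        obtain ⟨l, hl, ht⟩ := hp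
        obtain ⟨t, htc, htl⟩ := chain_finite_sub hchain hcne l hl
        exact (hcsub htc) ⟨l, htl, ht⟩) Γ h
  refine ⟨Γ', hsub, hmax.1, ?_⟩
  intro φ hφ hcons
  have h2 : insert φ Γ' ⊆ Γ' := hmax.2 hcons (Set.subset_insert _ _)
  exact hφ (h2 (Set.mem_insert _ _))

namespace MCS

variable {Γ : Set (Form S)} (hΓ : MCS Γ)

lemma mem_of_prov (hΓ : MCS Γ) {φ : Form S} (h : ProvKC' Γ φ) : φ ∈ Γ := by
  by_contra hφ
  refine hΓ.2 φ hφ ?_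
  intro hbot
  have h1 : ProvKC' Γ (Form.impl φ (botF S)) := deduction hbot
  exact absurd (prov_mp h1 h) hΓ.1

lemma thm_mem (hΓ : MCS Γ) {φ : Form S} (h : ThmKC' φ) : φ ∈ Γ :=
  hΓ.mem_of_prov (prov_of_thm h)

lemma mp_mem (hΓ : MCS Γ) {φ ψ : Form S} (h : Form.impl φ ψ ∈ Γ) (hφ : φ ∈ Γ) : ψ ∈ Γ :=
  hΓ.mem_of_prov (prov_mp (prov_of_mem h) (prov_of_mem hφ))

lemma not_both (hΓ : MCS Γ) {φ : Form S} (h1 : φ ∈ Γ) (h2 : Form.neg φ ∈ Γ) : False := by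
  have himp : ThmKC' (Form.impl φ (Form.impl (Form.neg φ) (botF S))) := thmTaut (by
    intro v hv
    rw [hv.tt_impl, hv.tt_impl, hv.tt_neg]
    intro ha hna
    exact absurd ha hna)
  exact hΓ.1 (prov_mp (prov_mp (prov_of_thm himp) (prov_of_mem h1)) (prov_of_mem h2))

lemma neg_mem_iff (hΓ : MCS Γ) {φ : Form S} : Form.neg φ ∈ Γ ↔ φ ∉ Γ := by
  constructor
  · intro h hφ; exact hΓ.not_both hφ h
  · intro hφ
    refine hΓ.mem_of_prov ?_
    have h1 : ¬ Cons (insert φ Γ) := hΓ.2 φ hφ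
    have h2 : ProvKC' (insert φ Γ) (botF S) := by
      by_contra hc; exact h1 hc
    have h3 : ProvKC' Γ (Form.impl φ (botF S)) := deduction h2
    refine prov_mp (prov_of_thm (thmTaut ?_)) h3
    intro v hv
    rw [hv.tt_impl, hv.tt_impl, hv.tt_neg]
    intro hi hφv
    exact hv.tt_botF (hi hφv)

lemma conj_mem_iff (hΓ : MCS Γ) {φ ψ : Form S} :
    Form.conj φ ψ ∈ Γ ↔ (φ ∈ Γ ∧ ψ ∈ Γ) := by
  constructor
  · intro h
    constructor
    · refine hΓ.mp_mem (hΓ.thm_mem (thmTaut ?_)) h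
      intro v hv; rw [hv.tt_impl, hv.tt_conj]; exact fun h => h.1
    · refine hΓ.mp_mem (hΓ.thm_mem (thmTaut ?_)) h
      intro v hv; rw [hv.tt_impl, hv.tt_conj]; exact fun h => h.2
  · rintro ⟨h1, h2⟩
    have himp : ThmKC' (Form.impl φ (Form.impl ψ (Form.conj φ ψ))) := thmTaut (by
      intro v hv
      rw [hv.tt_impl, hv.tt_impl, hv.tt_conj]
      exact fun a b => ⟨a, b⟩)
    exact hΓ.mp_mem (hΓ.mp_mem (hΓ.thm_mem himp) h1) h2

lemma bigOr_mem_exists (hΓ : MCS Γ) {l : List (Form S)} (h : bigOr l ∈ Γ) :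
    ∃ φ ∈ l, φ ∈ Γ := by
  by_contra hc
  push_neg at hc
  have hneg : ∀ φ ∈ l, Form.neg φ ∈ Γ := fun φ hφ => hΓ.neg_mem_iff.2 (hc φ hφ)
  have hthm : ThmKC' (impsFrom (bigOr l :: l.map Form.neg) (botF S)) := thmTaut (by
    intro v hv
    rw [hv.tt_impsFrom]
    intro hall
    have h1 : v (bigOr l) = true := hall _ (List.mem_cons_self)
    obtain ⟨φ, hφl, hφv⟩ := (hv.tt_bigOr l).1 h1
    have h2 : v (Form.neg φ) = true :=
      hall _ (List.mem_cons_of_mem _ (List.mem_map_of_mem hφl))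
    rw [hv.tt_neg] at h2
    exact absurd hφv h2)
  have hprov : ProvKC' Γ (botF S) := by
    refine ⟨bigOr l :: l.map Form.neg, ?_, hthm⟩
    intro χ hχ
    rcases List.mem_cons.1 hχ with rfl | hm
    · exact h
    · obtain ⟨φ, hφl, rfl⟩ := List.mem_map.1 hm
      exact hneg φ hφl
  exact hΓ.1 hprov

lemma bigOr_of_mem (hΓ : MCS Γ) {l : List (Form S)} {φ : Form S}
    (hl : φ ∈ l) (h : φ ∈ Γ) : bigOr l ∈ Γ := by
  refine hΓ.mp_mem (hΓ.thm_mem (thmTaut ?_)) h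
  intro v hv
  rw [hv.tt_impl]
  intro hφ
  exact (hv.tt_bigOr l).2 ⟨φ, hl, hφ⟩

lemma iffF_mem (hΓ : MCS Γ) {φ ψ : Form S} (h : Form.iffF φ ψ ∈ Γ) : (φ ∈ Γ ↔ ψ ∈ Γ) := by
  constructor
  · intro hφ
    refine hΓ.mp_mem (hΓ.mp_mem (hΓ.thm_mem (thmTaut ?_)) h) hφ
    intro v hv
    rw [hv.tt_impl, hv.tt_iffF, hv.tt_impl]
    exact fun hiff hφ => hiff.1 hφ
  · intro hψ
    refine hΓ.mp_mem (hΓ.mp_mem (hΓ.thm_mem (thmTaut ?_)) h) hψ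
    intro v hv
    rw [hv.tt_impl, hv.tt_iffF, hv.tt_impl]
    exact fun hiff hψ => hiff.2 hψ

end MCS

/-! ### Modal (S5) canonical relation -/

def KR (Γ Γ' : Set (Form S)) : Prop := ∀ φ : Form S, Form.know φ ∈ Γ → φ ∈ Γ'

lemma KR.refl {Γ : Set (Form S)} (hΓ : MCS Γ) : KR Γ Γ :=
  fun φ h => hΓ.mp_mem (hΓ.thm_mem (ThmKC'.axT φ)) h

lemma KR.trans {Γ₁ Γ₂ Γ₃ : Set (Form S)} (h1 : MCS Γ₁)
    (h12 : KR Γ₁ Γ₂) (h23 : KR Γ₂ Γ₃) : KR Γ₁ Γ₃ := by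
  intro φ h
  have h2 : Form.know (Form.know φ) ∈ Γ₁ := h1.mp_mem (h1.thm_mem (ThmKC'.ax4 φ)) h
  exact h23 φ (h12 _ h2)

lemma KR.symm {Γ₁ Γ₂ : Set (Form S)} (h1 : MCS Γ₁) (h2 : MCS Γ₂)
    (h12 : KR Γ₁ Γ₂) : KR Γ₂ Γ₁ := by
  intro φ h
  by_contra hφ
  have hK : Form.know φ ∉ Γ₁ := by
    intro hK
    exact hφ (h1.mp_mem (h1.thm_mem (ThmKC'.axT φ)) hK)
  have hnK : Form.neg (Form.know φ) ∈ Γ₁ := h1.neg_mem_iff.2 hK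
  have h5 : Form.know (Form.neg (Form.know φ)) ∈ Γ₁ :=
    h1.mp_mem (h1.thm_mem (ThmKC'.ax5 φ)) hnK
  have : Form.neg (Form.know φ) ∈ Γ₂ := h12 _ h5
  exact h2.not_both h this

lemma know_lift {l : List (Form S)} {φ : Form S} (h : ThmKC' (impsFrom l φ)) :
    ThmKC' (impsFrom (l.map Form.know) (Form.know φ)) := by
  have key : ∀ (l : List (Form S)) (φ : Form S),
      ThmKC' (Form.impl (Form.know (impsFrom l φ))
        (impsFrom (l.map Form.know) (Form.know φ))) := by
    intro l
    induction l with
    | nil =>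
        intro φ
        refine thmTaut ?_
        intro v hv; rw [hv.tt_impl]; exact id
    | cons ψ l ih =>
        intro φ
        have hK := ThmKC'.axK (S := S) ψ (impsFrom l φ)
        have hih := ih φ
        -- combine propositionally
        have hcomb : ThmKC' (Form.impl
            (Form.impl (Form.know (Form.impl ψ (impsFrom l φ)))
              (Form.impl (Form.know ψ) (Form.know (impsFrom l φ))))
            (Form.impl
              (Form.impl (Form.know (impsFrom l φ))
                (impsFrom (l.map Form.know) (Form.know φ)))
              (Form.impl (Form.know (Form.impl ψ (impsFrom l φ)))
                (Form.impl (Form.know ψ)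
                  (impsFrom (l.map Form.know) (Form.know φ)))))) := thmTaut (by
          intro v hv
          simp only [hv.tt_impl]
          intro hA hB hC hD
          exact hB (hA hC hD))
        exact ThmKC'.mp (ThmKC'.mp hcomb hK) hih
  exact ThmKC'.mp (key l φ) (ThmKC'.necK h)

lemma exists_KR_neg {Γ : Set (Form S)} (hΓ : MCS Γ) {φ : Form S}
    (hk : Form.know φ ∉ Γ) :
    ∃ Γ', MCS Γ' ∧ KR Γ Γ' ∧ Form.neg φ ∈ Γ' := by
  set Θ : Set (Form S) := insert (Form.neg φ) {ψ | Form.know ψ ∈ Γ} with hΘ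
  have hcons : Cons Θ := by
    intro hbot
    obtain ⟨l, hl, ht⟩ := hbot
    have h1 : ThmKC' (impsFrom (l.filter (fun χ => χ ≠ Form.neg φ))
        (Form.impl (Form.neg φ) (botF S))) := by
      refine thm_imps_extract ht ?_
      intro χ hχ
      by_cases hc : χ = Form.neg φ
      · exact Or.inl hc
      · exact Or.inr (List.mem_filter.2 ⟨hχ, by simpa using hc⟩)
    have h2 : ThmKC' (impsFrom (l.filter (fun χ => χ ≠ Form.neg φ)) φ) := by
      refine thm_imps_out h1 (tautOf ?_)
      intro v hv
      rw [hv.tt_impl, hv.tt_impl, hv.tt_neg]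
      intro h3
      by_contra hφv
      exact hv.tt_botF (h3 hφv)
    have h3 := know_lift h2
    have hprov : ProvKC' Γ (Form.know φ) := by
      refine ⟨(l.filter (fun χ => χ ≠ Form.neg φ)).map Form.know, ?_, h3⟩
      intro χ hχ
      obtain ⟨ψ, hψl, rfl⟩ := List.mem_map.1 hχ
      have hψΘ : ψ ∈ Θ := hl ψ (List.mem_of_mem_filter hψl)
      have hne : ψ ≠ Form.neg φ := by simpa using List.of_mem_filter hψl
      rcases hψΘ with rfl | hm
      · exact absurd rfl hne
      · exact hm
    exact hk (hΓ.mem_of_prov hprov)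
  obtain ⟨Γ', hsub, hΓ'⟩ := lindenbaum hcons
  refine ⟨Γ', hΓ', ?_, hsub (Set.mem_insert _ _)⟩
  intro ψ hψ
  exact hsub (Set.mem_insert_of_mem _ hψ)

/-! ### Canonical values -/

/-- The full intervention setting all variables other than `V` according to `g`. -/
def fullI (V : S.Var) (g : Others S V) : Intervention S := fun W =>
  if h : W = V then none else some (g ⟨W, h⟩)

/-- The value of `Y` after intervention `I`, according to the set `Γ`. -/
noncomputable def theVal (Γ : Set (Form S)) (I : Intervention S) (Y : S.Var) : S.Val Y :=
  Classical.epsilon (fun y => Form.int I (Form.eq Y y) ∈ Γ)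

/-- The valuation after intervention `I`, according to `Γ`. -/
noncomputable def envI (Γ : Set (Form S)) (I : Intervention S) : Env S :=
  fun X => theVal Γ I X

/-- The structural functions according to `Γ`. -/
noncomputable def FOf (Γ : Set (Form S)) : StructFuns S :=
  fun V g => theVal Γ (fullI V g) V

namespace MCS

variable {Γ : Set (Form S)}

lemma exists_intEq (hΓ : MCS Γ) (I : Intervention S) (Y : S.Var) :
    ∃ y : S.Val Y, Form.int I (Form.eq Y y) ∈ Γ := by
  have h := hΓ.thm_mem (ThmKC'.a2 I Y)
  obtain ⟨φ, hφl, hφΓ⟩ := hΓ.bigOr_mem_exists h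
  obtain ⟨y, _, rfl⟩ := List.mem_map.1 hφl
  exact ⟨y, hφΓ⟩

lemma theVal_spec (hΓ : MCS Γ) (I : Intervention S) (Y : S.Var) :
    Form.int I (Form.eq Y (theVal Γ I Y)) ∈ Γ :=
  Classical.epsilon_spec (hΓ.exists_intEq I Y)

lemma theVal_unique (hΓ : MCS Γ) {I : Intervention S} {Y : S.Var} {y : S.Val Y}
    (h : Form.int I (Form.eq Y y) ∈ Γ) : theVal Γ I Y = y := by
  by_contra hne
  have h1 := hΓ.thm_mem (ThmKC'.a1 I Y (theVal Γ I Y) y hne)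
  have h2 := hΓ.mp_mem h1 (hΓ.theVal_spec I Y)
  exact hΓ.not_both h h2

lemma mem_intEq_iff (hΓ : MCS Γ) {I : Intervention S} {Y : S.Var} {y : S.Val Y} :
    Form.int I (Form.eq Y y) ∈ Γ ↔ theVal Γ I Y = y := by
  constructor
  · exact hΓ.theVal_unique
  · rintro rfl; exact hΓ.theVal_spec I Y

lemma theVal_of_some (hΓ : MCS Γ) {I : Intervention S} {X : S.Var} {x : S.Val X}
    (h : I X = some x) : theVal Γ I X = x := by
  have hupd : iUpd I X x = I := by
    funext W
    by_cases hw : W = X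
    · subst hw; simp [iUpd, h]
    · simp [iUpd, Function.update_of_ne hw]
  have h4 := ThmKC'.a4 (S := S) I X x
  rw [hupd] at h4
  exact hΓ.theVal_unique (hΓ.thm_mem h4)

lemma theVal_exo_none (hΓ : MCS Γ) {I : Intervention S} {X : S.Var}
    (hexo : S.exo X) (h : I X = none) :
    theVal Γ I X = theVal Γ (iEmpty S) X := by
  have h7 := hΓ.thm_mem (ThmKC'.a7 I X (theVal Γ (iEmpty S) X) hexo h)
  have := (hΓ.iffF_mem h7).1 (hΓ.theVal_spec (iEmpty S) X)
  exact hΓ.theVal_unique this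

/-! ### Extension to full interventions (axiom A3) -/

lemma ext_pres_aux (hΓ : MCS Γ) (I : Intervention S) (f : ∀ W : S.Var, S.Val W) :
    ∀ (L : List S.Var) (J : Intervention S),
      (∀ W : S.Var, Form.int I (Form.eq W (f W)) ∈ Γ) →
      (∀ (Z : S.Var) (z : S.Val Z), Form.int I (Form.eq Z z) ∈ Γ →
        Form.int J (Form.eq Z z) ∈ Γ) →
      (∀ (Z : S.Var) (z : S.Val Z), Form.int I (Form.eq Z z) ∈ Γ →
        Form.int (L.foldl (fun J W => iUpd J W (f W)) J) (Form.eq Z z) ∈ Γ) := by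
  intro L
  induction L with
  | nil => intro J _ hJ Z z h; exact hJ Z z h
  | cons W L ih =>
      intro J hf hJ Z z h
      simp only [List.foldl_cons]
      refine ih (iUpd J W (f W)) hf ?_ Z z h
      intro Z' z' hz'
      have hW : Form.int J (Form.eq W (f W)) ∈ Γ := hJ W (f W) (hf W)
      have hZ' : Form.int J (Form.eq Z' z') ∈ Γ := hJ Z' z' hz'
      have h3 := hΓ.thm_mem (ThmKC'.a3 J W Z' (f W) z')
      exact hΓ.mp_mem h3 (hΓ.conj_mem_iff.2 ⟨hW, hZ'⟩)

lemma foldl_iUpd_apply (f : ∀ W : S.Var, S.Val W) :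
    ∀ (L : List S.Var) (J : Intervention S) (W : S.Var),
      (L.foldl (fun J W => iUpd J W (f W)) J) W
        = if W ∈ L then some (f W) else J W := by
  intro L
  induction L with
  | nil => intro J W; simp
  | cons a L ih =>
      intro J W
      simp only [List.foldl_cons, ih]
      by_cases hWL : W ∈ L
      · simp [hWL]
      · by_cases hWa : W = a
        · subst hWa; simp [hWL, iUpd]
        · simp [hWL, hWa, iUpd, Function.update_of_ne hWa]

lemma ext_full (hΓ : MCS Γ) (I : Intervention S) (V : S.Var) (hIV : I V = none) :
    ∀ (Z : S.Var) (z : S.Val Z), Form.int I (Form.eq Z z) ∈ Γ →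
      Form.int (fullI V ((envI Γ I).restrict V)) (Form.eq Z z) ∈ Γ := by
  intro Z z h
  set L : List S.Var := (Finset.univ.filter (fun W => W ≠ V)).toList with hL
  have hmemL : ∀ W : S.Var, W ∈ L ↔ W ≠ V := by
    intro W; simp [hL]
  have heq : L.foldl (fun J W => iUpd J W (theVal Γ I W)) I
      = fullI V ((envI Γ I).restrict V) := by
    funext W
    rw [foldl_iUpd_apply]
    by_cases hWV : W = V
    · subst hWV
      have hnm : W ∉ L := fun hm => absurd ((hmemL W).1 hm) (by simp)
      simp [fullI, hnm, hIV]
    · simp [fullI, hWV, (hmemL W).2 hWV, envI, Env.restrict]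
  rw [← heq]
  exact hΓ.ext_pres_aux I (fun W => theVal Γ I W) L I
    (fun W => hΓ.theVal_spec I W) (fun Z' z' h' => h') Z z h

end MCS

/-- `fullI V g` is a full intervention on everything but `V`. -/
lemma fullI_isSome (V : S.Var) (g : Others S V) :
    ∀ W : S.Var, ((fullI V g) W).isSome ↔ W ≠ V := by
  intro W
  by_cases h : W = V <;> simp [fullI, h]

/-- Agreement of structural functions along the canonical relation (axiom KL). -/
lemma FOf_agree {Γ Γ' : Set (Form S)} (hΓ : MCS Γ) (hΓ' : MCS Γ') (hR : KR Γ Γ')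
    {V : S.Var} (hV : ¬ S.exo V) (g : Others S V) : FOf Γ' V g = FOf Γ V g := by
  have hspec : Form.int (fullI V g) (Form.eq V (FOf Γ V g)) ∈ Γ :=
    hΓ.theVal_spec (fullI V g) V
  have hkl := hΓ.thm_mem (ThmKC'.kl (fullI V g) V (FOf Γ V g) hV (fullI_isSome V g))
  have hknow := hΓ.mp_mem hkl hspec
  have hmem : Form.int (fullI V g) (Form.eq V (FOf Γ V g)) ∈ Γ' := hR _ hknow
  exact hΓ'.theVal_unique hmem

/-! ### Uniqueness of intervened valuations -/

lemma exists_diff_coord {V : S.Var} (hV : ¬ S.exo V) (F : StructFuns S) :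
    ∀ (n : ℕ) (g₁ g₂ : Others S V),
      (Finset.univ.filter (fun X : {X : S.Var // X ≠ V} => g₁ X ≠ g₂ X)).card ≤ n →
      F V g₁ ≠ F V g₂ →
      ∃ X : {X : S.Var // X ≠ V}, g₁ X ≠ g₂ X ∧ DirAff F X.val V := by
  intro n
  induction n with
  | zero =>
      intro g₁ g₂ hcard hne
      exfalso
      apply hne
      have hempty : ∀ X : {X : S.Var // X ≠ V}, g₁ X = g₂ X := by
        intro X
        by_contra hX
        have : X ∈ Finset.univ.filter (fun X : {X : S.Var // X ≠ V} => g₁ X ≠ g₂ X) :=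
          Finset.mem_filter.2 ⟨Finset.mem_univ _, hX⟩
        have := Finset.card_pos.2 ⟨X, this⟩
        omega
      exact congrArg (F V) (funext hempty)
  | succ n ih =>
      intro g₁ g₂ hcard hne
      by_cases hgg : ∀ X : {X : S.Var // X ≠ V}, g₁ X = g₂ X
      · exact absurd (congrArg (F V) (funext hgg)) hne
      · push_neg at hgg
        obtain ⟨X₀, hX₀⟩ := hgg
        set g₁' := Function.update g₁ X₀ (g₂ X₀) with hg₁'
        by_cases hF : F V g₁' = F V g₁
        · have hne' : F V g₁' ≠ F V g₂ := hF ▸ hne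
          have hcard' : (Finset.univ.filter
              (fun X : {X : S.Var // X ≠ V} => g₁' X ≠ g₂ X)).card ≤ n := by
            have hsub : (Finset.univ.filter
                (fun X : {X : S.Var // X ≠ V} => g₁' X ≠ g₂ X)) ⊆
                (Finset.univ.filter
                  (fun X : {X : S.Var // X ≠ V} => g₁ X ≠ g₂ X)).erase X₀ := by
              intro X hX
              rw [Finset.mem_filter] at hX
              rw [Finset.mem_erase, Finset.mem_filter]
              have hXX₀ : X ≠ X₀ := by
                rintro rfl
                exact hX.2 (by simp [hg₁'])
              refine ⟨hXX₀, Finset.mem_univ _, ?_⟩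
              rw [hg₁', Function.update_of_ne hXX₀] at hX
              exact hX.2
            have hX₀mem : X₀ ∈ (Finset.univ.filter
                (fun X : {X : S.Var // X ≠ V} => g₁ X ≠ g₂ X)) :=
              Finset.mem_filter.2 ⟨Finset.mem_univ _, hX₀⟩
            have h1 := Finset.card_le_card hsub
            have h2 := Finset.card_erase_of_mem hX₀mem
            omega
          obtain ⟨X, hX1, hX2⟩ := ih g₁' g₂ hcard' hne'
          have hXX₀ : X ≠ X₀ := by
            rintro rfl
            exact hX1 (by simp [hg₁'])
          rw [hg₁', Function.update_of_ne hXX₀] at hX1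
          exact ⟨X, hX1, hX2⟩
        · refine ⟨X₀, hX₀, hV, X₀.2, g₁, g₁ X₀, g₂ X₀, hX₀, ?_⟩
          have e1 : Function.update g₁ ⟨X₀.1, X₀.2⟩ (g₁ X₀) = g₁ :=
            Function.update_eq_self X₀ g₁
          have e2 : Function.update g₁ ⟨X₀.1, X₀.2⟩ (g₂ X₀) = g₁' := rfl
          rw [e1, e2]
          exact fun h => hF h.symm

lemma iterate_transGen {α : Type*} {r : α → α → Prop} {D : Type*} (p : D → D)
    (π : D → α) (hp : ∀ d : D, r (π (p d)) (π d)) :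
    ∀ (n : ℕ) (d : D), Relation.TransGen r (π (p^[n+1] d)) (π d) := by
  intro n
  induction n with
  | zero => intro d; exact Relation.TransGen.single (hp d)
  | succ n ih =>
      intro d
      have h1 : Relation.TransGen r (π (p^[n+1] (p d))) (π (p d)) := ih (p d)
      rw [← Function.iterate_succ_apply] at h1
      exact Relation.TransGen.trans h1 (Relation.TransGen.single (hp d))

lemma intervenedVal_unique {F : StructFuns S} (hrec : RecursiveF F)
    (A : Env S) (I : Intervention S) {A₁ A₂ : Env S}
    (h1 : IntervenedVal F A I A₁) (h2 : IntervenedVal F A I A₂) : A₁ = A₂ := by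
  by_contra hne
  have hDne : ∃ V : S.Var, A₁ V ≠ A₂ V := by
    by_contra hc
    push_neg at hc
    exact hne (funext hc)
  set D : Finset S.Var := Finset.univ.filter (fun V => A₁ V ≠ A₂ V) with hD
  have hmemD : ∀ V : S.Var, V ∈ D ↔ A₁ V ≠ A₂ V := by intro V; simp [hD]
  have hstep : ∀ V ∈ D, ∃ X ∈ D, DirAff F X V := by
    intro V hV
    have hAV : A₁ V ≠ A₂ V := (hmemD V).1 hV
    by_cases hexo : S.exo V
    · exfalso
      cases hIV : I V with
      | none => exact hAV ((h1.2.1 V hexo hIV).trans (h2.2.1 V hexo hIV).symm)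
      | some v => exact hAV ((h1.1 V hexo v hIV).trans (h2.1 V hexo v hIV).symm)
    · cases hIV : I V with
      | some v =>
          exfalso
          have e1 : A₁ V = v := by rw [h1.2.2 V hexo]; simp [intF, hIV]
          have e2 : A₂ V = v := by rw [h2.2.2 V hexo]; simp [intF, hIV]
          exact hAV (e1.trans e2.symm)
      | none =>
          have e1 : A₁ V = F V (A₁.restrict V) := by
            rw [h1.2.2 V hexo]; simp [intF, hIV]
          have e2 : A₂ V = F V (A₂.restrict V) := by
            rw [h2.2.2 V hexo]; simp [intF, hIV]
          have hFne : F V (A₁.restrict V) ≠ F V (A₂.restrict V) := by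
            rw [← e1, ← e2]; exact hAV
          obtain ⟨X, hX1, hX2⟩ := exists_diff_coord hexo F
            (Finset.univ.filter
              (fun X : {X : S.Var // X ≠ V} => A₁.restrict V X ≠ A₂.restrict V X)).card
            (A₁.restrict V) (A₂.restrict V) le_rfl hFne
          refine ⟨X.val, (hmemD X.val).2 hX1, hX2⟩
  have hDnonempty : D.Nonempty := by
    obtain ⟨V, hV⟩ := hDne
    exact ⟨V, (hmemD V).2 hV⟩
  have hchoice : ∀ d : {V // V ∈ D}, ∃ d' : {V // V ∈ D}, DirAff F d'.val d.val := by
    rintro ⟨V, hV⟩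
    obtain ⟨X, hXD, hXV⟩ := hstep V hV
    exact ⟨⟨X, hXD⟩, hXV⟩
  choose p hp using hchoice
  obtain ⟨d₀⟩ : Nonempty {V // V ∈ D} := ⟨⟨hDnonempty.choose, hDnonempty.choose_spec⟩⟩
  obtain ⟨i, j, hij, heq⟩ := Finite.exists_ne_map_eq_of_infinite (fun n : ℕ => p^[n] d₀)
  wlog hlt : i < j generalizing i j
  · exact this j i hij.symm heq.symm (by omega)
  obtain ⟨d, rfl⟩ : ∃ d, j = i + (d + 1) := ⟨j - i - 1, by omega⟩
  have hiter := iterate_transGen p (fun d => d.val) hp d (p^[i] d₀)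
  rw [← Function.iterate_add_apply] at hiter
  rw [show d + 1 + i = i + (d + 1) from by omega, ← heq] at hiter
  exact hrec _ _ hiter hiter

lemma intVal_eq {F : StructFuns S} (hrec : RecursiveF F) {A : Env S}
    {I : Intervention S} {B : Env S} (hsol : IntervenedVal F A I B) :
    intVal F A I = B := by
  have hspec : IntervenedVal F A I (intVal F A I) :=
    Classical.epsilon_spec (⟨B, hsol⟩ : ∃ B, IntervenedVal F A I B)
  exact intervenedVal_unique hrec A I hspec hsol

/-! ### Recursiveness of the canonical structural functions -/

lemma DirAff.ne {F : StructFuns S} {X V : S.Var} (h : DirAff F X V) : X ≠ V := by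
  obtain ⟨_, hne, _⟩ := h
  exact hne

lemma fullI_update_eq {X V : S.Var} (hXV : X ≠ V) (g : Others S V) (x : S.Val X) :
    fullI V (Function.update g ⟨X, hXV⟩ x)
      = ltInt X V (fun W => g ⟨W.1, W.2.2⟩) x := by
  funext W
  by_cases hWX : W = X
  · subst hWX
    have hWV : W ≠ V := hXV
    simp only [fullI, ltInt, dif_neg hWV, dif_pos rfl]
    rw [Function.update_self]
    simp
  · by_cases hWV : W = V
    · subst hWV
      simp only [fullI, ltInt, dif_pos rfl, dif_neg hWX]
      simp
    · have hne : (⟨W, hWV⟩ : {X : S.Var // X ≠ V}) ≠ ⟨X, hXV⟩ := by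
        simp [Subtype.ext_iff, hWX]
      simp only [fullI, ltInt, dif_neg hWV, dif_neg hWX]
      rw [Function.update_of_ne hne]

lemma MCS.dirAff_leadsTo {Γ : Set (Form S)} (hΓ : MCS Γ) {X V : S.Var}
    (h : DirAff (FOf Γ) X V) : leadsTo X V ∈ Γ := by
  obtain ⟨hV, hXV, g, x₁, x₂, hx, hF⟩ := h
  set g' : ∀ W : {W : S.Var // W ≠ X ∧ W ≠ V}, S.Val W.val := fun W => g ⟨W.1, W.2.2⟩
    with hg'
  set v₁ := FOf Γ V (Function.update g ⟨X, hXV⟩ x₁) with hv₁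
  set v₂ := FOf Γ V (Function.update g ⟨X, hXV⟩ x₂) with hv₂
  have h₁ : Form.int (ltInt X V g' x₁) (Form.eq V v₁) ∈ Γ := by
    rw [← fullI_update_eq hXV g x₁]
    exact hΓ.theVal_spec _ V
  have h₂ : Form.int (ltInt X V g' x₂) (Form.eq V v₂) ∈ Γ := by
    rw [← fullI_update_eq hXV g x₂]
    exact hΓ.theVal_spec _ V
  have hconj := hΓ.conj_mem_iff.2 ⟨h₁, h₂⟩
  refine hΓ.bigOr_of_mem ?_ hconj
  refine List.mem_map.2 ⟨⟨g', (x₁, x₂), (v₁, v₂)⟩, ?_, rfl⟩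
  exact Finset.mem_toList.2 (Finset.mem_filter.2 ⟨Finset.mem_univ _, hx, hF⟩)

lemma MCS.chain_mem {Γ : Set (Form S)} (hΓ : MCS Γ) (X : ℕ → S.Var) :
    ∀ k : ℕ, (∀ i ≤ k, leadsTo (X i) (X (i + 1)) ∈ Γ) → chainConj X k ∈ Γ := by
  intro k
  induction k with
  | zero => intro h; exact h 0 le_rfl
  | succ k ih =>
      intro h
      exact hΓ.conj_mem_iff.2
        ⟨ih (fun i hi => h i (Nat.le_succ_of_le hi)), h (k + 1) le_rfl⟩

lemma transGen_path {α : Type*} {r : α → α → Prop} {a b : α}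
    (h : Relation.TransGen r a b) :
    ∃ (n : ℕ) (f : ℕ → α), 0 < n ∧ f 0 = a ∧ f n = b ∧ ∀ i < n, r (f i) (f (i + 1)) := by
  induction h with
  | @single c hr =>
      refine ⟨1, fun i => if i = 0 then a else c, Nat.one_pos, by simp, by simp, ?_⟩
      intro i hi
      have hi0 : i = 0 := by omega
      subst hi0
      simpa using hr
  | @tail c d hac hcd ih =>
      obtain ⟨n, f, hn, h0, hc, hsteps⟩ := ih
      refine ⟨n + 1, fun i => if i = n + 1 then d else f i, Nat.succ_pos n, ?_, by simp, ?_⟩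
      · have h00 : ¬ (0 = n + 1) := by omega
        simp [h00, h0]
      · intro i hi
        show r (if i = n + 1 then d else f i) (if i + 1 = n + 1 then d else f (i + 1))
        by_cases hin : i = n
        · rw [hin, if_neg (by omega : ¬ n = n + 1), if_pos rfl, hc]
          exact hcd
        · rw [if_neg (by omega : ¬ i = n + 1), if_neg (by omega : ¬ i + 1 = n + 1)]
          exact hsteps i (by omega)

lemma FOf_recursive {Γ : Set (Form S)} (hΓ : MCS Γ) : RecursiveF (FOf Γ) := by
  intro a b h1 h2
  obtain ⟨n₁, f₁, hn₁, hf₁0, hf₁n, hs₁⟩ := transGen_path h1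
  obtain ⟨n₂, f₂, hn₂, hf₂0, hf₂n, hs₂⟩ := transGen_path h2
  obtain ⟨p, rfl⟩ : ∃ p, n₁ = p + 1 := ⟨n₁ - 1, by omega⟩
  obtain ⟨q, rfl⟩ : ∃ q, n₂ = q + 1 := ⟨n₂ - 1, by omega⟩
  set g : ℕ → S.Var := fun i => if i ≤ p + 1 then f₁ i else f₂ (i - (p + 1)) with hg
  have hg0 : g 0 = a := by simp [hg, hf₁0]
  have hgb : ∀ i, p + 1 ≤ i → g i = f₂ (i - (p + 1)) := by
    intro i hi
    by_cases h : i ≤ p + 1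
    · have hieq : i = p + 1 := by omega
      subst hieq
      simp [hg, hf₁n, hf₂0]
    · simp [hg, h]
  have hedge : ∀ i, i < (p + 1) + (q + 1) → DirAff (FOf Γ) (g i) (g (i + 1)) := by
    intro i hi
    by_cases h : i < p + 1
    · have e1 : g i = f₁ i := if_pos (by omega)
      have e2 : g (i + 1) = f₁ (i + 1) := if_pos (by omega)
      rw [e1, e2]
      exact hs₁ i h
    · push_neg at h
      have e1 := hgb i h
      have e2 := hgb (i + 1) (by omega)
      have e3 : i + 1 - (p + 1) = (i - (p + 1)) + 1 := by omega
      rw [e1, e2, e3]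
      exact hs₂ (i - (p + 1)) (by omega)
  have hglast : g ((p + 1) + (q + 1)) = a := by
    rw [hgb ((p + 1) + (q + 1)) (by omega)]
    rw [show (p + 1) + (q + 1) - (p + 1) = q + 1 from by omega]
    exact hf₂n
  set k := p + q with hk
  have h6a : ∀ i, i ≤ k → g i ≠ g (i + 1) := by
    intro i hi
    exact (hedge i (by omega)).ne
  have h6b : g (k + 1) ≠ g 0 := by
    have hne := (hedge (k + 1) (by omega)).ne
    rw [show k + 1 + 1 = (p + 1) + (q + 1) from by omega, hglast, ← hg0] at hne
    exact hne
  have hchain : chainConj g k ∈ Γ := by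
    refine hΓ.chain_mem g k ?_
    intro i hi
    exact hΓ.dirAff_leadsTo (hedge i (by omega))
  have hlast : leadsTo (g (k + 1)) (g 0) ∈ Γ := by
    have := hedge (k + 1) (by omega)
    rw [show k + 1 + 1 = (p + 1) + (q + 1) from by omega, hglast, ← hg0] at this
    exact hΓ.dirAff_leadsTo this
  have h6 := hΓ.thm_mem (ThmKC'.a6 g k h6a h6b)
  have hneg := hΓ.mp_mem h6 hchain
  exact hΓ.not_both hlast hneg

/-! ### The canonical valuations solve the intervened equations -/

lemma envI_solution {Γ Γ' : Set (Form S)} (hΓ : MCS Γ) (hΓ' : MCS Γ') (hR : KR Γ Γ')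
    (I : Intervention S) :
    IntervenedVal (FOf Γ) (envI Γ' (iEmpty S)) I (envI Γ' I) := by
  refine ⟨?_, ?_, ?_⟩
  · intro X _ v hIX
    exact hΓ'.theVal_of_some hIX
  · intro X hexo hIX
    exact hΓ'.theVal_exo_none hexo hIX
  · intro V hexo
    cases hIV : I V with
    | some v =>
        have hv : envI Γ' I V = v := hΓ'.theVal_of_some hIV
        rw [hv]
        simp [intF, hIV]
    | none =>
        simp only [intF, hIV, Option.getD_none]
        rw [← FOf_agree hΓ hΓ' hR hexo]
        have h1 := hΓ'.ext_full I V hIV V (theVal Γ' I V) (hΓ'.theVal_spec I V)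
        exact (hΓ'.theVal_unique h1).symm

/-! ### Truth lemma -/

lemma truth_lemma {Γ : Set (Form S)} (hΓ : MCS Γ) {φ : Form S} (hφ : IsKC' φ) :
    ∀ Γ' : Set (Form S), MCS Γ' → KR Γ Γ' →
      (φ ∈ Γ' ↔ SatK φ (FOf Γ)
        {A : Env S | ∃ Δ', MCS Δ' ∧ KR Γ Δ' ∧ A = envI Δ' (iEmpty S)}
        (envI Γ' (iEmpty S))) := by
  induction hφ with
  | intEq I Y y =>
      intro Γ' hΓ' hR
      have hsol := envI_solution hΓ hΓ' hR I
      have heq : intVal (FOf Γ) (envI Γ' (iEmpty S)) I = envI Γ' I :=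
        intVal_eq (FOf_recursive hΓ) hsol
      simp only [SatK]
      rw [heq]
      exact hΓ'.mem_intEq_iff
  | neg hψ ih =>
      intro Γ' hΓ' hR
      simp only [SatK]
      rw [← ih Γ' hΓ' hR]
      exact hΓ'.neg_mem_iff
  | conj hψ hχ ih1 ih2 =>
      intro Γ' hΓ' hR
      simp only [SatK]
      rw [← ih1 Γ' hΓ' hR, ← ih2 Γ' hΓ' hR]
      exact hΓ'.conj_mem_iff
  | know hψ ih =>
      intro Γ' hΓ' hR
      simp only [SatK]
      constructor
      · intro hK B hB
        obtain ⟨Δ', hΔ', hRΔ, rfl⟩ := hB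
        have hR' : KR Γ' Δ' := KR.trans hΓ' (KR.symm hΓ hΓ' hR) hRΔ
        exact (ih Δ' hΔ' hRΔ).1 (hR' _ hK)
      · intro hall
        by_contra hK
        obtain ⟨Δ', hΔ', hRΔ', hnψ⟩ := exists_KR_neg hΓ' hK
        have hRΓΔ : KR Γ Δ' := KR.trans hΓ hR hRΔ'
        have hψΔ : _ ∉ Δ' := fun h => hΔ'.not_both h hnψ
        have hs := hall (envI Δ' (iEmpty S)) ⟨Δ', hΔ', hRΓΔ, rfl⟩
        exact hψΔ ((ih Δ' hΔ' hRΓΔ).2 hs)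

end Completeness


/-- Theorem: the proof system L′_KC is strongly complete for the language L′_KC
with respect to epistemic (recursive) causal models. -/
theorem LKC'_strongly_complete (S : Sig) (Δ : Set (Form S)) (δ : Form S)
    (hΔ : ∀ ψ ∈ Δ, IsKC' ψ) (hδ : IsKC' δ)
    (hsem : ∀ (F : StructFuns S) (T : Set (Env S)) (A : Env S),
      RecursiveF F → T.Nonempty → (∀ B ∈ T, Complies F B) → A ∈ T →
      (∀ ψ ∈ Δ, SatK ψ F T A) → SatK δ F T A) :
    ProvKC' Δ δ := by
  by_contra hnp
  have hcons : Cons (insert (Form.neg δ) Δ) := by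
    intro hbot
    apply hnp
    have h1 : ProvKC' Δ (Form.impl (Form.neg δ) (botF S)) := deduction hbot
    refine prov_mp (prov_of_thm (thmTaut ?_)) h1
    intro v hv
    rw [hv.tt_impl, hv.tt_impl, hv.tt_neg]
    intro h2
    by_contra hδv
    exact hv.tt_botF (h2 hδv)
  obtain ⟨Γ, hsub, hΓ⟩ := lindenbaum hcons
  have hrec := FOf_recursive hΓ
  have hself : envI Γ (iEmpty S) ∈
      {A : Env S | ∃ Δ', MCS Δ' ∧ KR Γ Δ' ∧ A = envI Δ' (iEmpty S)} :=
    ⟨Γ, hΓ, KR.refl hΓ, rfl⟩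
  have hcomp : ∀ B ∈ {A : Env S | ∃ Δ', MCS Δ' ∧ KR Γ Δ' ∧ A = envI Δ' (iEmpty S)},
      Complies (FOf Γ) B := by
    rintro B ⟨Δ', hΔ', hRΔ, rfl⟩
    intro V hV
    have h3 := (envI_solution hΓ hΔ' hRΔ (iEmpty S)).2.2 V hV
    simpa [intF, iEmpty] using h3
  have hsat : ∀ ψ ∈ Δ, SatK ψ (FOf Γ)
      {A : Env S | ∃ Δ', MCS Δ' ∧ KR Γ Δ' ∧ A = envI Δ' (iEmpty S)}
      (envI Γ (iEmpty S)) := by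
    intro ψ hψ
    exact (truth_lemma hΓ (hΔ ψ hψ) Γ hΓ (KR.refl hΓ)).1
      (hsub (Set.mem_insert_of_mem _ hψ))
  have hδsat := hsem (FOf Γ) _ (envI Γ (iEmpty S)) hrec ⟨_, hself⟩ hcomp hself hsat
  have hnegmem : Form.neg δ ∈ Γ := hsub (Set.mem_insert _ _)
  exact (fun h => hΓ.not_both h hnegmem)
    ((truth_lemma hΓ hδ Γ hΓ (KR.refl hΓ)).2 hδsat)
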